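/- Let Q be the n×n tridiagonal matrix with diagonal entries -v_1,...,-v_n (each v_i ≥ 2) and 1's on the super/sub-diagonals, and let y = (-v_1+2, -v_2+2, ..., -v_n+2). For every x ∈ ℝ^n with |x_i| ≤ |y_i| for all i and |x_{i₀}| < |y_{i₀}| for at least one i₀, one has xᵀQ^{-1}x > yᵀQ^{-1}y. -/

import Mathlib

open Matrix

/-- The tridiagonal matrix with diagonal entries `-v i` and `1`'s on the
super- and sub-diagonal. -/
def triQ {n : ℕ} (v : Fin n → ℤ) : Matrix (Fin n) (Fin n) ℝ :=
  Matrix.of fun i j =>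
    if i = j then -(v i : ℝ)
    else if (i : ℕ) + 1 = (j : ℕ) ∨ (j : ℕ) + 1 = (i : ℕ) then 1 else 0

namespace TriQAux

variable {n : ℕ}

/-- The negated matrix `-(triQ v)` is symmetric (hence hermitian over ℝ). -/
lemma negTriQ_isHermitian (v : Fin n → ℤ) : (-(triQ v)).IsHermitian := by
  unfold Matrix.IsHermitian
  ext i j
  simp only [conjTranspose_apply, Matrix.neg_apply, triQ, of_apply, star_trivial]
  rw [neg_inj]
  rcases eq_or_ne i j with h | h
  · subst h; simp
  · rw [if_neg (Ne.symm h), if_neg h]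
    have : ((j : ℕ) + 1 = (i : ℕ) ∨ (i : ℕ) + 1 = (j : ℕ)) ↔
        ((i : ℕ) + 1 = (j : ℕ) ∨ (j : ℕ) + 1 = (i : ℕ)) := or_comm
    exact if_congr this rfl rfl

/-- Entry formula for `-(triQ v)` as a difference of indicator terms. -/
lemma negTriQ_apply (v : Fin n → ℤ) (i j : Fin n) :
    (-(triQ v)) i j =
      (if (i : ℕ) = (j : ℕ) then (v i : ℝ) else 0)
      - (if (i : ℕ) + 1 = (j : ℕ) then (1 : ℝ) else 0)
      - (if (j : ℕ) + 1 = (i : ℕ) then (1 : ℝ) else 0) := by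
  simp only [Matrix.neg_apply, triQ, of_apply]
  rcases eq_or_ne i j with h | h
  · subst h
    simp
  · have h' : (i : ℕ) ≠ (j : ℕ) := fun hh => h (Fin.ext hh)
    rw [if_neg h, if_neg h']
    by_cases h2 : (i : ℕ) + 1 = (j : ℕ)
    · have h3 : ¬ ((j : ℕ) + 1 = (i : ℕ)) := by omega
      simp [h2, h3]
    · by_cases h3 : (j : ℕ) + 1 = (i : ℕ) <;> simp [h2, h3]

lemma quad_eq (v : Fin n → ℤ) (z : Fin n → ℝ)
    (Z : ℕ → ℝ) (hZ : ∀ k, Z k = if h : k < n then z ⟨k, h⟩ else 0)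
    (V : ℕ → ℝ) (hV : ∀ k, V k = if h : k < n then (v ⟨k, h⟩ : ℝ) else 0) :
    z ⬝ᵥ (-(triQ v)) *ᵥ z =
      (∑ i ∈ Finset.range n, V i * (Z i * Z i))
      - 2 * ∑ i ∈ Finset.range n, Z i * Z (i + 1) := by
  have hZa : ∀ i : Fin n, Z (i : ℕ) = z i := fun i => by rw [hZ]; simp [i.isLt]
  have hVa : ∀ i : Fin n, V (i : ℕ) = (v i : ℝ) := fun i => by rw [hV]; simp [i.isLt]
  have hZn : ∀ k, ¬ k < n → Z k = 0 := fun k hk => by rw [hZ]; simp [hk]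
  set G : ℕ → ℕ → ℝ := fun i j =>
    (if i = j then V i else 0) * (Z i * Z j)
    - (if i + 1 = j then (1 : ℝ) else 0) * (Z i * Z j)
    - (if j + 1 = i then (1 : ℝ) else 0) * (Z i * Z j) with hG
  have step1 : z ⬝ᵥ (-(triQ v)) *ᵥ z = ∑ i : Fin n, ∑ j : Fin n, G (i : ℕ) (j : ℕ) := by
    simp only [dotProduct, mulVec]
    refine Finset.sum_congr rfl fun i _ => ?_
    rw [Finset.mul_sum]
    refine Finset.sum_congr rfl fun j _ => ?_
    rw [negTriQ_apply v i j, hG]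
    simp only
    rw [← hZa i, ← hZa j, ← hVa i]
    ring
  have step2 : (∑ i : Fin n, ∑ j : Fin n, G (i : ℕ) (j : ℕ))
      = ∑ i ∈ Finset.range n, ∑ j ∈ Finset.range n, G i j := by
    have inner : ∀ k : ℕ, (∑ j : Fin n, G k (j : ℕ)) = ∑ j ∈ Finset.range n, G k j :=
      fun k => Fin.sum_univ_eq_sum_range (fun j => G k j) n
    calc (∑ i : Fin n, ∑ j : Fin n, G (i : ℕ) (j : ℕ))
        = ∑ i : Fin n, ∑ j ∈ Finset.range n, G (i : ℕ) j :=
          Finset.sum_congr rfl fun i _ => inner i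
      _ = ∑ i ∈ Finset.range n, ∑ j ∈ Finset.range n, G i j :=
          Fin.sum_univ_eq_sum_range (fun i => ∑ j ∈ Finset.range n, G i j) n
  have T1 : (∑ i ∈ Finset.range n, ∑ j ∈ Finset.range n,
      (if i = j then V i else 0) * (Z i * Z j)) = ∑ i ∈ Finset.range n, V i * (Z i * Z i) := by
    refine Finset.sum_congr rfl fun i hi => ?_
    have h2 : (∑ j ∈ Finset.range n, (if i = j then V i else 0) * (Z i * Z j))
        = ∑ j ∈ Finset.range n, (if i = j then V i * (Z i * Z j) else 0) := by
      refine Finset.sum_congr rfl fun j _ => ?_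
      split_ifs <;> ring
    rw [h2, Finset.sum_ite_eq (Finset.range n) i (fun j => V i * (Z i * Z j)), if_pos hi]
  have T2 : (∑ i ∈ Finset.range n, ∑ j ∈ Finset.range n,
      (if i + 1 = j then (1 : ℝ) else 0) * (Z i * Z j))
      = ∑ i ∈ Finset.range n, Z i * Z (i + 1) := by
    refine Finset.sum_congr rfl fun i _ => ?_
    have h1 : (∑ j ∈ Finset.range n, (if i + 1 = j then Z i * Z j else 0))
        = if i + 1 ∈ Finset.range n then Z i * Z (i + 1) else 0 :=
      Finset.sum_ite_eq (Finset.range n) (i + 1) (fun j => Z i * Z j)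
    have h2 : (∑ j ∈ Finset.range n, (if i + 1 = j then (1 : ℝ) else 0) * (Z i * Z j))
        = ∑ j ∈ Finset.range n, (if i + 1 = j then Z i * Z j else 0) := by
      refine Finset.sum_congr rfl fun j _ => ?_
      split_ifs <;> ring
    rw [h2, h1]
    split_ifs with h
    · rfl
    · rw [hZn (i + 1) (by simpa using h)]; ring
  have T3 : (∑ i ∈ Finset.range n, ∑ j ∈ Finset.range n,
      (if j + 1 = i then (1 : ℝ) else 0) * (Z i * Z j))
      = ∑ i ∈ Finset.range n, Z i * Z (i + 1) := by
    rw [Finset.sum_comm]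
    refine Finset.sum_congr rfl fun j _ => ?_
    have h1 : (∑ i ∈ Finset.range n, (if j + 1 = i then Z i * Z j else 0))
        = if j + 1 ∈ Finset.range n then Z (j + 1) * Z j else 0 :=
      Finset.sum_ite_eq (Finset.range n) (j + 1) (fun i => Z i * Z j)
    have h2 : (∑ i ∈ Finset.range n, (if j + 1 = i then (1 : ℝ) else 0) * (Z i * Z j))
        = ∑ i ∈ Finset.range n, (if j + 1 = i then Z i * Z j else 0) := by
      refine Finset.sum_congr rfl fun i _ => ?_
      split_ifs <;> ring
    rw [h2, h1]
    split_ifs with h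
    · ring
    · rw [hZn (j + 1) (by simpa using h)]; ring
  rw [step1, step2]
  simp only [hG, Finset.sum_sub_distrib]
  rw [T1, T2, T3]
  ring

lemma negTriQ_posDef (v : Fin n → ℤ) (hv : ∀ i, 2 ≤ v i) : (-(triQ v)).PosDef := by
  refine PosDef.of_dotProduct_mulVec_pos (negTriQ_isHermitian v) fun z hz => ?_
  have hstar : star z = z := by
    funext i; simp
  rw [hstar]
  set Z : ℕ → ℝ := fun k => if h : k < n then z ⟨k, h⟩ else 0 with hZdef
  set V : ℕ → ℝ := fun k => if h : k < n then (v ⟨k, h⟩ : ℝ) else 0 with hVdef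
  have hZ : ∀ k, Z k = if h : k < n then z ⟨k, h⟩ else 0 := fun k => rfl
  have hV : ∀ k, V k = if h : k < n then (v ⟨k, h⟩ : ℝ) else 0 := fun k => rfl
  rw [quad_eq v z Z hZ V hV]
  -- shift identity
  have hZn0 : Z n = 0 := by rw [hZ]; simp
  have shift : (∑ i ∈ Finset.range n, Z (i + 1) ^ 2)
      = (∑ i ∈ Finset.range n, Z i ^ 2) - Z 0 ^ 2 := by
    have h1 := Finset.sum_range_succ' (fun i => Z i ^ 2) n
    have h2 := Finset.sum_range_succ (fun i => Z i ^ 2) n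
    rw [hZn0] at h2
    linarith [h1, h2]
  have expand : (∑ i ∈ Finset.range n, (Z i - Z (i + 1)) ^ 2)
      = (∑ i ∈ Finset.range n, Z i ^ 2) + (∑ i ∈ Finset.range n, Z (i + 1) ^ 2)
        - 2 * ∑ i ∈ Finset.range n, Z i * Z (i + 1) := by
    have e1 : (∑ i ∈ Finset.range n, (Z i - Z (i + 1)) ^ 2)
        = ∑ i ∈ Finset.range n, (Z i ^ 2 + Z (i + 1) ^ 2 - 2 * (Z i * Z (i + 1))) :=
      Finset.sum_congr rfl fun i _ => by ring
    rw [e1, Finset.sum_sub_distrib, Finset.sum_add_distrib, ← Finset.mul_sum]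
  have hVge : ∀ i ∈ Finset.range n, 2 * (Z i * Z i) ≤ V i * (Z i * Z i) := by
    intro i hi
    have hin : i < n := Finset.mem_range.mp hi
    have : (2 : ℝ) ≤ V i := by
      rw [hV]; simp only [hin, dif_pos]
      exact_mod_cast hv ⟨i, hin⟩
    nlinarith [mul_self_nonneg (Z i)]
  have hmain : Z 0 ^ 2 + (∑ i ∈ Finset.range n, (Z i - Z (i + 1)) ^ 2)
      ≤ (∑ i ∈ Finset.range n, V i * (Z i * Z i))
        - 2 * ∑ i ∈ Finset.range n, Z i * Z (i + 1) := by
    have hsum2 : (∑ i ∈ Finset.range n, 2 * (Z i * Z i))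
        ≤ ∑ i ∈ Finset.range n, V i * (Z i * Z i) := Finset.sum_le_sum hVge
    have h2sq : (∑ i ∈ Finset.range n, 2 * (Z i * Z i)) = 2 * ∑ i ∈ Finset.range n, Z i ^ 2 := by
      rw [Finset.mul_sum]; refine Finset.sum_congr rfl fun i _ => by ring
    rw [h2sq] at hsum2
    linarith [expand, shift, hsum2]
  -- strict positivity of the Dirichlet part
  have hpos : 0 < Z 0 ^ 2 + ∑ i ∈ Finset.range n, (Z i - Z (i + 1)) ^ 2 := by
    rcases lt_or_ge 0 (Z 0 ^ 2 + ∑ i ∈ Finset.range n, (Z i - Z (i + 1)) ^ 2) with h | h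
    · exact h
    · exfalso
      have hsq : 0 ≤ ∑ i ∈ Finset.range n, (Z i - Z (i + 1)) ^ 2 :=
        Finset.sum_nonneg fun i _ => sq_nonneg _
      have hZ0 : Z 0 = 0 := by
        have : Z 0 ^ 2 ≤ 0 := by linarith
        have := sq_nonneg (Z 0)
        have : Z 0 ^ 2 = 0 := le_antisymm ‹Z 0 ^ 2 ≤ 0› ‹0 ≤ Z 0 ^ 2›
        exact pow_eq_zero_iff (by norm_num) |>.mp this
      have hsum0 : (∑ i ∈ Finset.range n, (Z i - Z (i + 1)) ^ 2) = 0 := by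
        have : (∑ i ∈ Finset.range n, (Z i - Z (i + 1)) ^ 2) ≤ 0 := by nlinarith [sq_nonneg (Z 0)]
        linarith
      have hterm : ∀ i ∈ Finset.range n, (Z i - Z (i + 1)) ^ 2 = 0 :=
        (Finset.sum_eq_zero_iff_of_nonneg fun i _ => sq_nonneg _).mp hsum0
      have hstep : ∀ i, i < n → Z (i + 1) = Z i := by
        intro i hi
        have := hterm i (Finset.mem_range.mpr hi)
        have := pow_eq_zero_iff (two_ne_zero) |>.mp this
        linarith [this]
      have hall : ∀ k, Z k = 0 := by
        intro k
        induction k with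
        | zero => exact hZ0
        | succ m ih =>
          by_cases hm : m < n
          · rw [hstep m hm, ih]
          · rw [hZ]; have : ¬ m + 1 < n := by omega
            simp [this]
      apply hz
      funext i
      have := hall (i : ℕ)
      rw [hZ] at this
      simpa [i.isLt] using this
  linarith

lemma inv_entry_nonneg {A : Matrix (Fin n) (Fin n) ℝ} (hA : A.PosDef)
    (hoff : ∀ i j, i ≠ j → A i j ≤ 0) : ∀ i j, 0 ≤ A⁻¹ i j := by
  have hdet : IsUnit A.det := A.isUnit_iff_isUnit_det.mp hA.isUnit
  have hsolve : ∀ b : Fin n → ℝ, (∀ i, 0 ≤ b i) → ∀ i, 0 ≤ (A⁻¹ *ᵥ b) i := by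
    intro b hb
    set u : Fin n → ℝ := A⁻¹ *ᵥ b with hu
    have hAu : A *ᵥ u = b := by
      rw [hu, mulVec_mulVec, Matrix.mul_nonsing_inv _ hdet, one_mulVec]
    set w : Fin n → ℝ := fun i => max (-u i) 0 with hw
    set p : Fin n → ℝ := fun i => max (u i) 0 with hp
    have hw0 : ∀ i, 0 ≤ w i := fun i => le_max_right _ _
    have hp0 : ∀ i, 0 ≤ p i := fun i => le_max_right _ _
    have hup : w = p - u := by
      funext i
      simp only [hw, hp, Pi.sub_apply]
      rcases le_total (u i) 0 with h | h
      · rw [max_eq_left (by linarith), max_eq_right h]; ring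
      · rw [max_eq_right (by linarith), max_eq_left h]; ring
    have hwp : ∀ i, w i * p i = 0 := by
      intro i
      rcases le_total (u i) 0 with h | h
      · simp only [hw, hp]; rw [max_eq_right h]; ring
      · simp only [hw, hp]; rw [max_eq_right (by linarith : -u i ≤ 0)]; ring
    have h1 : w ⬝ᵥ (A *ᵥ p) ≤ 0 := by
      simp only [dotProduct, mulVec]
      refine Finset.sum_nonpos fun i _ => ?_
      rw [Finset.mul_sum]
      refine Finset.sum_nonpos fun j _ => ?_
      rcases eq_or_ne i j with h | h
      · subst h
        rw [show w i * (A i i * p i) = A i i * (w i * p i) by ring, hwp i, mul_zero]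
      · have := hoff i j h
        have : A i j * p j ≤ 0 := mul_nonpos_of_nonpos_of_nonneg this (hp0 j)
        exact mul_nonpos_of_nonneg_of_nonpos (hw0 i) this
    have h2 : 0 ≤ w ⬝ᵥ b := Finset.sum_nonneg fun i _ => mul_nonneg (hw0 i) (hb i)
    have h3 : w ⬝ᵥ (A *ᵥ w) ≤ 0 := by
      have hAw : A *ᵥ w = A *ᵥ p - A *ᵥ u := by rw [hup, Matrix.mulVec_sub]
      rw [hAw, dotProduct_sub, hAu]
      linarith
    have hwzero : w = 0 := by
      by_contra hne
      have := hA.dotProduct_mulVec_pos (x := w) hne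
      rw [show star w = w from funext fun i => by simp] at this
      linarith
    intro i
    have : w i = 0 := congrFun hwzero i
    simp only [hw] at this
    have : -u i ≤ 0 := by
      by_contra hc
      push_neg at hc
      rw [max_eq_left hc.le] at this
      linarith
    linarith [this]
  intro i j
  have := hsolve (Pi.single j 1) (fun k => by
    rcases eq_or_ne k j with h | h <;> simp [h, Pi.single_apply]) i
  simpa using this

end TriQAux

theorem stmt6 {n : ℕ} (v : Fin n → ℤ) (hv : ∀ i, 2 ≤ v i)
    (y : Fin n → ℝ) (hy : ∀ i, y i = -(v i : ℝ) + 2)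
    (x : Fin n → ℝ) (hbox : ∀ i, |x i| ≤ |y i|)
    (i₀ : Fin n) (hstrict : |x i₀| < |y i₀|) :
    x ⬝ᵥ (triQ v)⁻¹.mulVec x > y ⬝ᵥ (triQ v)⁻¹.mulVec y := by
  set A : Matrix (Fin n) (Fin n) ℝ := -(triQ v) with hAdef
  have hApd : A.PosDef := TriQAux.negTriQ_posDef v hv
  have hdet : IsUnit A.det := A.isUnit_iff_isUnit_det.mp hApd.isUnit
  have hPpd : A⁻¹.PosDef := hApd.inv
  have hPnn : ∀ i j, 0 ≤ A⁻¹ i j := by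
    refine TriQAux.inv_entry_nonneg hApd fun i j hij => ?_
    rw [hAdef]
    rw [TriQAux.negTriQ_apply v i j]
    have h' : (i : ℕ) ≠ (j : ℕ) := fun hh => hij (Fin.ext hh)
    rw [if_neg h']
    split_ifs <;> norm_num
  have hQinv : (triQ v)⁻¹ = -(A⁻¹) := by
    apply Matrix.inv_eq_right_inv
    have : triQ v = -A := by rw [hAdef, neg_neg]
    rw [this, Matrix.neg_mul, Matrix.mul_neg, neg_neg, Matrix.mul_nonsing_inv _ hdet]
  rw [hQinv]
  set P := A⁻¹ with hP
  have hform : ∀ s t : Fin n → ℝ, s ⬝ᵥ P *ᵥ t = ∑ i, ∑ j, P i j * (s i * t j) := by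
    intro s t
    simp only [dotProduct, mulVec]
    refine Finset.sum_congr rfl fun i _ => ?_
    rw [Finset.mul_sum]
    exact Finset.sum_congr rfl fun j _ => by ring
  have hneg : ∀ t : Fin n → ℝ, t ⬝ᵥ (-P) *ᵥ t = -(t ⬝ᵥ P *ᵥ t) := by
    intro t
    rw [Matrix.neg_mulVec, dotProduct_neg]
  have key : x ⬝ᵥ P *ᵥ x < y ⬝ᵥ P *ᵥ y := by
    set a : Fin n → ℝ := fun i => |x i| with ha
    set b : Fin n → ℝ := fun i => |y i| with hb
    have hy' : ∀ i, y i ≤ 0 := by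
      intro i
      have h2 : (2 : ℝ) ≤ (v i : ℝ) := by exact_mod_cast hv i
      rw [hy i]; linarith
    have hby : b = -y := funext fun i => by
      simp only [hb, Pi.neg_apply]; exact abs_of_nonpos (hy' i)
    set d : Fin n → ℝ := b - a with hd
    have hd0 : ∀ i, 0 ≤ d i := fun i => sub_nonneg.mpr (hbox i)
    have ha0 : ∀ i, 0 ≤ a i := fun i => abs_nonneg _
    have hdne : d ≠ 0 := by
      intro h
      have := congrFun h i₀
      simp only [hd, Pi.sub_apply, Pi.zero_apply, hb, ha] at this
      linarith
    have step1 : x ⬝ᵥ P *ᵥ x ≤ a ⬝ᵥ P *ᵥ a := by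
      rw [hform, hform]
      refine Finset.sum_le_sum fun i _ => Finset.sum_le_sum fun j _ => ?_
      refine mul_le_mul_of_nonneg_left ?_ (hPnn i j)
      calc x i * x j ≤ |x i * x j| := le_abs_self _
        _ = a i * a j := abs_mul _ _
    have cross1 : 0 ≤ a ⬝ᵥ P *ᵥ d := by
      rw [hform]
      refine Finset.sum_nonneg fun i _ => Finset.sum_nonneg fun j _ => ?_
      exact mul_nonneg (hPnn i j) (mul_nonneg (ha0 i) (hd0 j))
    have cross2 : 0 ≤ d ⬝ᵥ P *ᵥ a := by
      rw [hform]
      refine Finset.sum_nonneg fun i _ => Finset.sum_nonneg fun j _ => ?_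
      exact mul_nonneg (hPnn i j) (mul_nonneg (hd0 i) (ha0 j))
    have hdd : 0 < d ⬝ᵥ P *ᵥ d := by
      have := hPpd.dotProduct_mulVec_pos (x := d) hdne
      rwa [show star d = d from funext fun i => by simp] at this
    have hbexp : b ⬝ᵥ P *ᵥ b
        = a ⬝ᵥ P *ᵥ a + a ⬝ᵥ P *ᵥ d + d ⬝ᵥ P *ᵥ a + d ⬝ᵥ P *ᵥ d := by
      have hab : b = a + d := by rw [hd]; abel
      rw [hab, Matrix.mulVec_add, dotProduct_add, add_dotProduct, add_dotProduct]
      ring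
    have hby2 : b ⬝ᵥ P *ᵥ b = y ⬝ᵥ P *ᵥ y := by
      rw [hby]
      simp only [Matrix.mulVec_neg, dotProduct_neg, neg_dotProduct, neg_neg]
    calc x ⬝ᵥ P *ᵥ x ≤ a ⬝ᵥ P *ᵥ a := step1
      _ < b ⬝ᵥ P *ᵥ b := by rw [hbexp]; linarith
      _ = y ⬝ᵥ P *ᵥ y := hby2
  show y ⬝ᵥ (-P) *ᵥ y < x ⬝ᵥ (-P) *ᵥ x
  rw [hneg, hneg]
  exact neg_lt_neg key
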